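/- Let (N(t), t ≥ 0) be the block-counting process of Kingman's coalescent started with n blocks: N is a pure death process jumping from k to k−1 at rate C(k,2) = k(k−1)/2. Let t = t(n) → 0 with 1/t(n) = o(n). Then for any 0 < ε < 1/2 and n sufficiently large, P(1−ε < t·N(t)/2 < 1+ε) > 1 − exp(−ε²/t). -/

import Mathlib

open MeasureTheory ProbabilityTheory Real Filter Set
open scoped NNReal ENNReal

namespace Stmt6Aux

/-- `1/(1+x) ≤ exp(x²/2 - x)` for `x ≥ 0`. -/
lemma inv_one_add_le {x : ℝ} (hx : 0 ≤ x) : (1 + x)⁻¹ ≤ exp (x ^ 2 / 2 - x) := by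
  have h1 : (0:ℝ) < 1 + x := by linarith
  rw [inv_le_iff_one_le_mul₀ h1]
  have key : ∀ y ∈ Ici (0:ℝ), 1 ≤ (1 + y) * exp (y ^ 2 / 2 - y) := by
    intro y hy
    have := fun z : ℝ => ((hasDerivAt_id z).pow 2 |>.div_const 2 |>.sub (hasDerivAt_id z)).exp
    have hmono : MonotoneOn (fun y : ℝ => (1 + y) * exp (y ^ 2 / 2 - y)) (Ici 0) := by
      apply monotoneOn_of_deriv_nonneg (convex_Ici 0)
      · fun_prop
      · fun_prop
      · intro z hz
        simp only [interior_Ici, mem_Ioi] at hz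
        have hd := ((hasDerivAt_const z (1:ℝ)).add (hasDerivAt_id z)).mul (this z)
        simp only [id_eq] at hd
        rw [show deriv (fun y : ℝ => (1 + y) * exp (y ^ 2 / 2 - y)) z = _ from hd.deriv]
        simp only [Pi.add_apply, Pi.sub_apply, Pi.pow_apply, id_eq, Nat.cast_ofNat, Nat.reduceSub, pow_one, mul_one]
        have := exp_pos (z ^ 2 / 2 - z)
        nlinarith [exp_pos (z ^ 2 / 2 - z), mul_nonneg (exp_pos (z ^ 2 / 2 - z)).le (sq_nonneg z)]
    have h0 : (fun y : ℝ => (1 + y) * exp (y ^ 2 / 2 - y)) 0 = 1 := by norm_num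
    calc (1:ℝ) = (1 + 0) * exp ((0:ℝ) ^ 2 / 2 - 0) := by norm_num
    _ ≤ (1 + y) * exp (y ^ 2 / 2 - y) := hmono (by simp) hy hy
  exact le_of_eq_of_le (by ring_nf) ((key x hx).trans_eq (by ring_nf))

/-- telescoping sum over `Icc (m+1) n`. -/
lemma sum_Icc_telescope (f : ℕ → ℝ) {m n : ℕ} (h : m ≤ n) :
    ∑ k ∈ Finset.Icc (m + 1) n, (f (k - 1) - f k) = f m - f n := by
  induction n with
  | zero => interval_cases m; simp
  | succ n ih =>
    rcases Nat.lt_or_ge m (n + 1) with hm | hm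
    · have hmn : m ≤ n := Nat.lt_succ_iff.mp hm
      rw [← Finset.Ico_add_one_right_eq_Icc, Finset.sum_Ico_succ_top (by omega), Finset.Ico_add_one_right_eq_Icc, ih hmn]
      simp only [Nat.add_sub_cancel]
      ring
    · have : m = n + 1 := le_antisymm h hm
      subst this
      simp

/-- per-term upper bound for the upper tail: `l/(l-θ) ≤ exp(θ/l + θ²/(l(l-θ)))`. -/
lemma ratio_le_exp_upper {l θ : ℝ} (hl : 0 < l) (hθ : 0 ≤ θ) (hθl : θ < l) :
    l / (l - θ) ≤ exp (θ / l + θ ^ 2 / (l * (l - θ))) := by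
  have h1 : 0 < l - θ := by linarith
  have h2 : l / (l - θ) = 1 + θ / (l - θ) := by field_simp; ring
  have h3 : θ / (l - θ) = θ / l + θ ^ 2 / (l * (l - θ)) := by field_simp; ring
  rw [h2, ← h3]
  have := Real.add_one_le_exp (θ / (l - θ))
  linarith

/-- per-term upper bound for the lower tail: `l/(l+θ) ≤ exp(-θ/l + θ²/(2l²))`. -/
lemma ratio_le_exp_lower {l θ : ℝ} (hl : 0 < l) (hθ : 0 ≤ θ) :
    l / (l + θ) ≤ exp (-(θ / l) + θ ^ 2 / (2 * l ^ 2)) := by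
  have hx : 0 ≤ θ / l := div_nonneg hθ hl.le
  have h1 : 0 < l + θ := by linarith
  calc l / (l + θ) = (1 + θ / l)⁻¹ := by
        rw [inv_eq_one_div]; field_simp
    _ ≤ exp ((θ / l) ^ 2 / 2 - θ / l) := inv_one_add_le hx
    _ = exp (-(θ / l) + θ ^ 2 / (2 * l ^ 2)) := by
        congr 1
        rw [div_pow]
        ring

set_option maxHeartbeats 1000000 in
/-- numeric bound, upper tail. -/
lemma numU {ε t m : ℝ} (hε0 : 0 < ε) (hε : ε < 1/2) (ht : 0 < t) (ht2 : t ≤ ε/40)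
    (hm1 : 1 ≤ m) (hm : 2*(1+ε) ≤ m*t + t) :
    -(3*ε*m^2/8)*t + (3*ε*m^2/8)*(2/m) + (3*ε*m^2/8)^2/(1-3*ε/4)*(4/(3*m^3))
      ≤ -(21/20)*ε^2/t := by
  have hm0 : (0:ℝ) < m := by linarith
  have h43 : (0:ℝ) < 4 - 3*ε := by linarith
  have e2 : (3*ε*m^2/8)*(2/m) = m*ε*(3/4) := by field_simp; ring
  have e3 : (3*ε*m^2/8)^2/(1-3*ε/4)*(4/(3*m^3)) = m*ε*((3*ε/4)/(4-3*ε)) := by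
    have h14 : (1 - 3*ε/4) ≠ 0 := by intro h; rw [sub_eq_zero] at h; linarith
    field_simp
    ring
  have e1 : -(3*ε*m^2/8)*t ≤ m*ε*(-(3/8)*(2+2*ε-t)) := by
    have : (3*ε*m/8) * (2+2*ε-t) ≤ (3*ε*m/8) * (m*t) := by
      apply mul_le_mul_of_nonneg_left (by linarith) (by positivity)
    nlinarith
  rw [e2, e3]
  have bracket : -(3/8)*(2+2*ε-t) + 3/4 + (3*ε/4)/(4-3*ε)
      = 3*t/8 - (9/4)*ε*(1-ε)/(4-3*ε) := by
    field_simp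
    ring
  have step1 : -(3*ε*m^2/8)*t + m*ε*(3/4) + m*ε*((3*ε/4)/(4-3*ε))
      ≤ m*ε*(3*t/8 - (9/4)*ε*(1-ε)/(4-3*ε)) := by
    calc -(3*ε*m^2/8)*t + m*ε*(3/4) + m*ε*((3*ε/4)/(4-3*ε))
        ≤ m*ε*(-(3/8)*(2+2*ε-t)) + m*ε*(3/4) + m*ε*((3*ε/4)/(4-3*ε)) := by linarith
      _ = m*ε*(-(3/8)*(2+2*ε-t) + 3/4 + (3*ε/4)/(4-3*ε)) := by ring
      _ = m*ε*(3*t/8 - (9/4)*ε*(1-ε)/(4-3*ε)) := by rw [bracket]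
  refine step1.trans ?_
  obtain ⟨C, hCdef⟩ : ∃ C : ℝ, C = 9/4*ε*(1-ε)/(4-3*ε) := ⟨_, rfl⟩
  rw [← hCdef]
  have hCd : C*(4-3*ε) = 9/4*ε*(1-ε) := by rw [hCdef, div_mul_cancel₀ _ h43.ne']
  have hC32 : 9/32*ε ≤ C := by nlinarith
  have hC8 : 3*t/8 ≤ C := by linarith
  have hkey : (21/20)*ε ≤ (2+2*ε-t)*(C - 3*t/8) := by
    have h1 : ε*t ≤ ε*(ε/40) := mul_le_mul_of_nonneg_left ht2 hε0.le
    have h2 : ε^2*ε ≤ ε^2*(1/2) := mul_le_mul_of_nonneg_left hε.le (sq_nonneg ε)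
    have h3 : ε*t^2 ≤ (1/2)*t^2 := by nlinarith [sq_nonneg t]
    have hQ : (21/20)*ε*(4-3*ε) ≤ (2+2*ε-t)*(9/4*ε*(1-ε) - 3*t/8*(4-3*ε)) := by
      nlinarith [h1, h2, h3, mul_nonneg (mul_nonneg hε0.le hε0.le) ht.le, sq_nonneg t]
    have h6 : (21/20)*ε*(4-3*ε) ≤ ((2+2*ε-t)*(C-3*t/8))*(4-3*ε) := by
      have : ((2+2*ε-t)*(C-3*t/8))*(4-3*ε) = (2+2*ε-t)*(C*(4-3*ε) - 3*t/8*(4-3*ε)) := by ring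
      rw [this, hCd]
      exact hQ
    exact le_of_mul_le_mul_right h6 h43
  have hmt' : (2+2*ε-t) ≤ m*t := by linarith
  have h5 : (21/20)*ε ≤ (m*t)*(C-3*t/8) :=
    hkey.trans (mul_le_mul_of_nonneg_right hmt' (by linarith))
  calc m*ε*(3*t/8 - C) = -((ε/t)*((m*t)*(C-3*t/8))) := by field_simp; ring
    _ ≤ -((ε/t)*((21/20)*ε)) := by
        apply neg_le_neg
        exact mul_le_mul_of_nonneg_left h5 (by positivity)
    _ = -(21/20)*ε^2/t := by field_simp

set_option maxHeartbeats 1000000 in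
/-- numeric bound, lower tail. -/
lemma numL {ε t m n : ℝ} (hε0 : 0 < ε) (hε : ε < 1/2) (ht : 0 < t) (ht2 : t ≤ ε/40)
    (hm1 : 1 ≤ m) (hmta : m*t ≤ 2*(1-ε)) (hmtb : 2*(1-ε) ≤ m*t + t)
    (hn0 : 0 < n) (hn : m/n ≤ ε/50) :
    (3*ε*m^2/2)*t - (3*ε*m^2/2)*(2/m - 2/n) + (3*ε*m^2/2)^2/2*(4/(3*m^3))
      ≤ -(21/20)*ε^2/t := by
  have hm0 : (0:ℝ) < m := by linarith
  have e1 : (3*ε*m^2/2)*t ≤ (3*ε*m/2)*(2*(1-ε)) := by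
    have : (3*ε*m^2/2)*t = (3*ε*m/2)*(m*t) := by ring
    rw [this]
    exact mul_le_mul_of_nonneg_left hmta (by positivity)
  have e2 : (3*ε*m^2/2)*(2/m - 2/n) = 3*ε*m - 3*ε*m*(m/n) := by
    field_simp
  have e3 : (3*ε*m^2/2)^2/2*(4/(3*m^3)) = (3/2)*ε^2*m := by
    field_simp
    ring
  have e4 : 3*ε*m*(m/n) ≤ 3*ε*m*(ε/50) :=
    mul_le_mul_of_nonneg_left hn (by positivity)
  rw [e2, e3]
  have step1 : (3*ε*m^2/2)*t - (3*ε*m - 3*ε*m*(m/n)) + (3/2)*ε^2*m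
      ≤ -(36/25)*ε^2*m := by nlinarith [e1, e4]
  refine step1.trans ?_
  have hmt' : 2-2*ε-t ≤ m*t := by linarith
  have h21 : (21/20) ≤ (36/25)*(m*t) := by nlinarith
  calc -(36/25)*ε^2*m = -((ε^2/t)*((36/25)*(m*t))) := by field_simp
    _ ≤ -((ε^2/t)*(21/20)) := by
        apply neg_le_neg
        exact mul_le_mul_of_nonneg_left h21 (by positivity)
    _ = -(21/20)*ε^2/t := by field_simp

lemma epdfReal_eq (l x : ℝ) :
    exponentialPDFReal l x = if 0 ≤ x then l * exp (-(l * x)) else 0 := by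
  rw [exponentialPDFReal, gammaPDFReal]
  simp only [rpow_one, Gamma_one, div_one, sub_self, rpow_zero, mul_one]

lemma map_eq_expMeasure {Ω : Type} [MeasureSpace Ω] [IsProbabilityMeasure (ℙ : Measure Ω)]
    {X : Ω → ℝ} (hX : Measurable X) {l : ℝ} (hl : 0 < l)
    (htail : ∀ s : ℝ, 0 ≤ s → ℙ {ω | s < X ω} = ENNReal.ofReal (exp (-l * s))) :
    Measure.map X ℙ = expMeasure l := by
  have hprob : IsProbabilityMeasure (Measure.map X ℙ) :=
    Measure.isProbabilityMeasure_map hX.aemeasurable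
  refine MeasureTheory.Measure.ext_of_Iic _ _ (fun a => ?_)
  have hexp : expMeasure l (Iic a)
      = ENNReal.ofReal (if 0 ≤ a then 1 - exp (-(l * a)) else 0) := by
    rw [expMeasure, gammaMeasure, withDensity_apply _ measurableSet_Iic]
    exact lintegral_exponentialPDF_eq_antiDeriv hl a
  rw [Measure.map_apply hX measurableSet_Iic, hexp]
  have hIic : X ⁻¹' Iic a = {ω | a < X ω}ᶜ := by ext ω; simp [not_lt]
  have hmeasIoi : ∀ b : ℝ, MeasurableSet {ω | b < X ω} := by
    intro b
    exact hX measurableSet_Ioi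
  by_cases ha : 0 ≤ a
  · rw [if_pos ha, hIic, prob_compl_eq_one_sub (hmeasIoi a), htail a ha]
    rw [ENNReal.ofReal_sub _ (exp_pos _).le, ENNReal.ofReal_one, neg_mul]
  · rw [if_neg ha]
    have h0 : ℙ {ω | 0 < X ω} = 1 := by
      have := htail 0 le_rfl
      simpa using this
    have hc : ℙ ({ω | 0 < X ω}ᶜ) = 0 := by
      rw [prob_compl_eq_one_sub (hmeasIoi 0), h0, tsub_self]
    have hsub : X ⁻¹' Iic a ⊆ {ω | 0 < X ω}ᶜ := by
      intro ω hω
      simp only [mem_preimage, mem_Iic] at hω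
      simp only [mem_compl_iff, mem_setOf_eq, not_lt]
      linarith
    simpa [ENNReal.ofReal_zero] using measure_mono_null hsub hc

lemma exp_mul_integrable_and_mgf {Ω : Type} [MeasureSpace Ω]
    [IsProbabilityMeasure (ℙ : Measure Ω)]
    {X : Ω → ℝ} (hX : Measurable X) {l : ℝ} (hl : 0 < l)
    (htail : ∀ s : ℝ, 0 ≤ s → ℙ {ω | s < X ω} = ENNReal.ofReal (exp (-l * s)))
    {u : ℝ} (hu : u < l) :
    Integrable (fun ω => exp (u * X ω)) ℙ ∧ mgf X ℙ u = l / (l - u) := by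
  have hmap := map_eq_expMeasure hX hl htail
  have hlu : 0 < l - u := by linarith
  set f : ℝ → ℝ≥0 := fun x => (exponentialPDFReal l x).toNNReal with hf
  have hfmeas : Measurable f := (measurable_exponentialPDFReal l).real_toNNReal
  have hDen : expMeasure l = volume.withDensity (fun x => (f x : ℝ≥0∞)) := rfl
  have hsmul : (fun x => f x • exp (u * x))
      = (Ici (0:ℝ)).indicator (fun x => l * exp (-((l - u) * x))) := by
    funext x
    have hnn := exponentialPDFReal_nonneg hl x
    rw [NNReal.smul_def, hf]
    simp only [Real.coe_toNNReal _ hnn]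
    rw [Set.indicator_apply]
    split_ifs with hx
    · rw [smul_eq_mul, epdfReal_eq, if_pos (mem_Ici.mp hx), mul_assoc, ← Real.exp_add]
      congr 2
      ring
    · rw [smul_eq_mul, epdfReal_eq, if_neg (fun h => hx (mem_Ici.mpr h)), zero_mul]
  have hIntInd : Integrable ((Ici (0:ℝ)).indicator (fun x => l * exp (-((l - u) * x)))) volume := by
    rw [integrable_indicator_iff measurableSet_Ici]
    have h1 : IntegrableOn (fun x => exp (-(l - u) * x)) (Ioi (0:ℝ)) :=
      exp_neg_integrableOn_Ioi 0 hlu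
    have h2 : IntegrableOn (fun x => l * exp (-((l - u) * x))) (Ioi (0:ℝ)) := by
      have h3 := h1.const_mul l
      simp only [neg_mul] at h3
      exact h3
    rwa [← integrableOn_Ici_iff_integrableOn_Ioi] at h2
  have hgmeas : AEStronglyMeasurable (fun x : ℝ => exp (u * x)) (Measure.map X ℙ) :=
    (Real.continuous_exp.comp (continuous_const.mul continuous_id)).aestronglyMeasurable
  constructor
  · have hi : Integrable ((fun x : ℝ => exp (u * x)) ∘ X) ℙ := by
      rw [← integrable_map_measure hgmeas hX.aemeasurable, hmap, hDen,
        integrable_withDensity_iff_integrable_smul hfmeas, hsmul]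
      exact hIntInd
    exact hi
  · have h1 : mgf X ℙ u = ∫ x, exp (u * x) ∂(Measure.map X ℙ) := by
      rw [integral_map hX.aemeasurable hgmeas, mgf]
    rw [h1, hmap, hDen, integral_withDensity_eq_integral_smul hfmeas, hsmul,
      integral_indicator measurableSet_Ici, integral_Ici_eq_integral_Ioi,
      integral_const_mul]
    have h2 : ∫ x in Ioi (0:ℝ), exp (-((l - u) * x)) = (l - u)⁻¹ := by
      have h3 := integral_comp_mul_left_Ioi (fun y => exp (-y)) 0 hlu
      simp only [mul_zero, integral_exp_neg_Ioi, neg_zero, Real.exp_zero, smul_eq_mul,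
        mul_one] at h3
      exact h3
    rw [h2, div_eq_mul_inv]

/-- `∑_{k=m+1}^n 1/λ_k = 2/m - 2/n` where `λ_k = k(k-1)/2`. -/
lemma sum_inv_lam {m n : ℕ} (hm : 1 ≤ m) (hmn : m ≤ n) :
    ∑ k ∈ Finset.Icc (m + 1) n, 1 / ((k:ℝ) * ((k:ℝ) - 1) / 2)
      = 2 / (m:ℝ) - 2 / (n:ℝ) := by
  have h := sum_Icc_telescope (fun j => 2 / (j:ℝ)) hmn
  rw [← h]
  apply Finset.sum_congr rfl
  intro k hk
  rw [Finset.mem_Icc] at hk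
  have hk2 : 2 ≤ k := le_trans (by omega) hk.1
  have hkR : (2:ℝ) ≤ (k:ℝ) := by exact_mod_cast hk2
  simp only [Nat.cast_sub (show 1 ≤ k by omega), Nat.cast_one]
  have h1 : (0:ℝ) < (k:ℝ) - 1 := by linarith
  have h2 : (0:ℝ) < (k:ℝ) := by linarith
  field_simp
  ring

/-- `∑_{k=m+1}^n 1/λ_k² ≤ 4/(3m³)`. -/
lemma sum_inv_lam_sq {m n : ℕ} (hm : 1 ≤ m) (hmn : m ≤ n) :
    ∑ k ∈ Finset.Icc (m + 1) n, 1 / ((k:ℝ) * ((k:ℝ) - 1) / 2) ^ 2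
      ≤ 4 / (3 * (m:ℝ) ^ 3) := by
  have hmR : (1:ℝ) ≤ (m:ℝ) := by exact_mod_cast hm
  have step : ∑ k ∈ Finset.Icc (m + 1) n, 1 / ((k:ℝ) * ((k:ℝ) - 1) / 2) ^ 2
      ≤ ∑ k ∈ Finset.Icc (m + 1) n,
        ((fun j : ℕ => 4 / (3 * (j:ℝ) ^ 3)) (k - 1) - (fun j : ℕ => 4 / (3 * (j:ℝ) ^ 3)) k) := by
    apply Finset.sum_le_sum
    intro k hk
    rw [Finset.mem_Icc] at hk
    have hk2 : 2 ≤ k := le_trans (by omega) hk.1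
    have hkR : (2:ℝ) ≤ (k:ℝ) := by exact_mod_cast hk2
    simp only [Nat.cast_sub (show 1 ≤ k by omega), Nat.cast_one]
    have h1 : (0:ℝ) < (k:ℝ) - 1 := by linarith
    have h2 : (0:ℝ) < (k:ℝ) := by linarith
    rw [div_sub_div _ _ (by positivity) (by positivity), div_le_div_iff₀ (by positivity) (by positivity)]
    ring_nf
    nlinarith [pow_pos h1 3, pow_pos h2 3, mul_pos h1 h2, sq_nonneg ((k:ℝ) - 1), mul_pos (mul_pos h1 h1) (mul_pos h2 h2)]
  refine step.trans ?_
  rw [sum_Icc_telescope (fun j : ℕ => 4 / (3 * (j:ℝ) ^ 3)) hmn]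
  have hn0 : (0:ℝ) < (n:ℝ) := by
    have : 1 ≤ n := le_trans hm hmn
    exact_mod_cast Nat.lt_of_lt_of_le Nat.zero_lt_one this
  have : 0 ≤ 4 / (3 * (n:ℝ) ^ 3) := by positivity
  linarith

variable {Ω : Type} [MeasureSpace Ω] [IsProbabilityMeasure (ℙ : Measure Ω)]

lemma lam_lb {m n k : ℕ} (hm : 1 ≤ m) (hk : k ∈ Finset.Icc (m + 1) n) :
    (m:ℝ) ^ 2 / 2 ≤ (k:ℝ) * ((k:ℝ) - 1) / 2 ∧ (0:ℝ) < (k:ℝ) * ((k:ℝ) - 1) / 2 := by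
  rw [Finset.mem_Icc] at hk
  have h1 : (m:ℝ) + 1 ≤ (k:ℝ) := by exact_mod_cast hk.1
  have h2 : (1:ℝ) ≤ (m:ℝ) := by exact_mod_cast hm
  constructor
  · nlinarith
  · nlinarith

/-- Chernoff bound assembly, upper tail. -/
lemma chernoff_upper {E : ℕ → Ω → ℝ} (hmeas : ∀ k, Measurable (E k))
    (hindep : iIndepFun E ℙ)
    {m n : ℕ} (hm : 1 ≤ m) (hmn : m ≤ n)
    (htail : ∀ k, 2 ≤ k → k ≤ n → ∀ s : ℝ, 0 ≤ s →
      ℙ {ω | s < E k ω} = ENNReal.ofReal (exp (-((k:ℝ) * ((k:ℝ) - 1) / 2) * s)))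
    {t ε : ℝ} (ht : 0 < t) (hε0 : 0 < ε) (hε : ε < 1/2) :
    (ℙ {ω | t ≤ ∑ k ∈ Finset.Icc (m + 1) n, E k ω}).toReal
      ≤ exp (-(3*ε*(m:ℝ)^2/8)*t + (3*ε*(m:ℝ)^2/8)*(2/(m:ℝ))
          + (3*ε*(m:ℝ)^2/8)^2/(1-3*ε/4)*(4/(3*(m:ℝ)^3))) := by
  classical
  set θ : ℝ := 3*ε*(m:ℝ)^2/8 with hθdef
  have hmR : (1:ℝ) ≤ (m:ℝ) := by exact_mod_cast hm
  have hθ0 : 0 ≤ θ := by positivity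
  have h34 : 0 < 1 - 3*ε/4 := by linarith
  -- facts about each k in the interval
  have hlam : ∀ k ∈ Finset.Icc (m + 1) n,
      θ < (k:ℝ) * ((k:ℝ) - 1) / 2 ∧ (0:ℝ) < (k:ℝ) * ((k:ℝ) - 1) / 2 := by
    intro k hk
    obtain ⟨hlb, hpos⟩ := lam_lb hm hk
    refine ⟨?_, hpos⟩
    have : θ < (m:ℝ)^2/2 := by
      rw [hθdef]
      nlinarith
    linarith
  have hmgf : ∀ k ∈ Finset.Icc (m + 1) n,
      Integrable (fun ω => exp (θ * E k ω)) ℙ ∧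
      mgf (E k) ℙ θ = ((k:ℝ) * ((k:ℝ) - 1) / 2) / ((k:ℝ) * ((k:ℝ) - 1) / 2 - θ) := by
    intro k hk
    have hk' := Finset.mem_Icc.mp hk
    exact exp_mul_integrable_and_mgf (hmeas k) (hlam k hk).2
      (htail k (by omega) hk'.2) (hlam k hk).1
  have h_int : ∀ k ∈ Finset.Icc (m + 1) n, Integrable (fun ω => exp (θ * E k ω)) ℙ :=
    fun k hk => (hmgf k hk).1
  have h_int_sum := hindep.integrable_exp_mul_sum hmeas h_int
  have hset : {ω | t ≤ ∑ k ∈ Finset.Icc (m + 1) n, E k ω}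
      = {ω | t ≤ (∑ k ∈ Finset.Icc (m + 1) n, E k) ω} := by
    ext ω; simp [Finset.sum_apply]
  have hcher := measure_ge_le_exp_mul_mgf (μ := ℙ) (X := ∑ k ∈ Finset.Icc (m + 1) n, E k)
      t hθ0 h_int_sum
  rw [hset]
  refine hcher.trans ?_
  rw [hindep.mgf_sum hmeas]
  -- bound the product
  have hprod : ∏ k ∈ Finset.Icc (m + 1) n, mgf (E k) ℙ θ
      ≤ exp (∑ k ∈ Finset.Icc (m + 1) n,
          (θ / ((k:ℝ) * ((k:ℝ) - 1) / 2)
            + θ^2 / (((k:ℝ) * ((k:ℝ) - 1) / 2) * ((k:ℝ) * ((k:ℝ) - 1) / 2 - θ)))) := by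
    rw [Real.exp_sum]
    apply Finset.prod_le_prod
    · intro k hk; exact mgf_nonneg
    · intro k hk
      rw [(hmgf k hk).2]
      exact ratio_le_exp_upper (hlam k hk).2 hθ0 (hlam k hk).1
  have hsum : ∑ k ∈ Finset.Icc (m + 1) n,
      (θ / ((k:ℝ) * ((k:ℝ) - 1) / 2)
        + θ^2 / (((k:ℝ) * ((k:ℝ) - 1) / 2) * ((k:ℝ) * ((k:ℝ) - 1) / 2 - θ)))
      ≤ θ*(2/(m:ℝ)) + θ^2/(1-3*ε/4)*(4/(3*(m:ℝ)^3)) := by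
    rw [Finset.sum_add_distrib]
    have hA : ∑ k ∈ Finset.Icc (m + 1) n, θ / ((k:ℝ) * ((k:ℝ) - 1) / 2) ≤ θ*(2/(m:ℝ)) := by
      have : ∑ k ∈ Finset.Icc (m + 1) n, θ / ((k:ℝ) * ((k:ℝ) - 1) / 2)
          = θ * ∑ k ∈ Finset.Icc (m + 1) n, 1 / ((k:ℝ) * ((k:ℝ) - 1) / 2) := by
        rw [Finset.mul_sum]
        apply Finset.sum_congr rfl
        intro k hk
        rw [div_eq_mul_one_div]
      rw [this, sum_inv_lam hm hmn]
      have hn0 : (0:ℝ) < (n:ℝ) := by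
        have : 1 ≤ n := le_trans hm hmn
        exact_mod_cast Nat.lt_of_lt_of_le Nat.zero_lt_one this
      have : 2/(m:ℝ) - 2/(n:ℝ) ≤ 2/(m:ℝ) := by
        have : 0 ≤ 2/(n:ℝ) := by positivity
        linarith
      exact mul_le_mul_of_nonneg_left this hθ0
    have hB : ∑ k ∈ Finset.Icc (m + 1) n,
        θ^2 / (((k:ℝ) * ((k:ℝ) - 1) / 2) * ((k:ℝ) * ((k:ℝ) - 1) / 2 - θ))
        ≤ θ^2/(1-3*ε/4)*(4/(3*(m:ℝ)^3)) := by
      have step : ∀ k ∈ Finset.Icc (m + 1) n,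
          θ^2 / (((k:ℝ) * ((k:ℝ) - 1) / 2) * ((k:ℝ) * ((k:ℝ) - 1) / 2 - θ))
          ≤ θ^2/(1-3*ε/4) * (1 / ((k:ℝ) * ((k:ℝ) - 1) / 2)^2) := by
        intro k hk
        obtain ⟨hθk, hpos⟩ := hlam k hk
        obtain ⟨hlb, _⟩ := lam_lb hm hk
        have hθ34 : θ ≤ 3*ε/4 * ((k:ℝ) * ((k:ℝ) - 1) / 2) := by
          rw [hθdef]
          nlinarith
        have hden : (1-3*ε/4) * ((k:ℝ) * ((k:ℝ) - 1) / 2)^2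
            ≤ ((k:ℝ) * ((k:ℝ) - 1) / 2) * ((k:ℝ) * ((k:ℝ) - 1) / 2 - θ) := by
          nlinarith
        have hden0 : 0 < (1-3*ε/4) * ((k:ℝ) * ((k:ℝ) - 1) / 2)^2 := by positivity
        calc θ^2 / (((k:ℝ) * ((k:ℝ) - 1) / 2) * ((k:ℝ) * ((k:ℝ) - 1) / 2 - θ))
            ≤ θ^2 / ((1-3*ε/4) * ((k:ℝ) * ((k:ℝ) - 1) / 2)^2) := by
              apply div_le_div_of_nonneg_left (by positivity) hden0 hden
            -- careful: need ≤ direction: smaller denominator → larger value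
          _ = θ^2/(1-3*ε/4) * (1 / ((k:ℝ) * ((k:ℝ) - 1) / 2)^2) := by
              field_simp
      calc ∑ k ∈ Finset.Icc (m + 1) n,
          θ^2 / (((k:ℝ) * ((k:ℝ) - 1) / 2) * ((k:ℝ) * ((k:ℝ) - 1) / 2 - θ))
          ≤ ∑ k ∈ Finset.Icc (m + 1) n, θ^2/(1-3*ε/4) * (1 / ((k:ℝ) * ((k:ℝ) - 1) / 2)^2) :=
            Finset.sum_le_sum step
        _ = θ^2/(1-3*ε/4) * ∑ k ∈ Finset.Icc (m + 1) n, 1 / ((k:ℝ) * ((k:ℝ) - 1) / 2)^2 := by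
            rw [Finset.mul_sum]
        _ ≤ θ^2/(1-3*ε/4)*(4/(3*(m:ℝ)^3)) := by
            apply mul_le_mul_of_nonneg_left (sum_inv_lam_sq hm hmn) (by positivity)
    linarith
  calc exp (-θ * t) * ∏ k ∈ Finset.Icc (m + 1) n, mgf (E k) ℙ θ
      ≤ exp (-θ * t) * exp (∑ k ∈ Finset.Icc (m + 1) n,
          (θ / ((k:ℝ) * ((k:ℝ) - 1) / 2)
            + θ^2 / (((k:ℝ) * ((k:ℝ) - 1) / 2) * ((k:ℝ) * ((k:ℝ) - 1) / 2 - θ)))) :=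
        mul_le_mul_of_nonneg_left hprod (exp_pos _).le
    _ = exp (-θ * t + ∑ k ∈ Finset.Icc (m + 1) n,
          (θ / ((k:ℝ) * ((k:ℝ) - 1) / 2)
            + θ^2 / (((k:ℝ) * ((k:ℝ) - 1) / 2) * ((k:ℝ) * ((k:ℝ) - 1) / 2 - θ)))) :=
        (Real.exp_add _ _).symm
    _ ≤ exp (-θ*t + (θ*(2/(m:ℝ)) + θ^2/(1-3*ε/4)*(4/(3*(m:ℝ)^3)))) := by
        apply exp_le_exp.mpr
        have : -θ * t = -θ*t := by ring
        linarith [hsum]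
    _ = exp (-θ*t + θ*(2/(m:ℝ)) + θ^2/(1-3*ε/4)*(4/(3*(m:ℝ)^3))) := by ring_nf

/-- Chernoff bound assembly, lower tail. -/
lemma chernoff_lower {E : ℕ → Ω → ℝ} (hmeas : ∀ k, Measurable (E k))
    (hindep : iIndepFun E ℙ)
    {m n : ℕ} (hm : 1 ≤ m) (hmn : m ≤ n)
    (htail : ∀ k, 2 ≤ k → k ≤ n → ∀ s : ℝ, 0 ≤ s →
      ℙ {ω | s < E k ω} = ENNReal.ofReal (exp (-((k:ℝ) * ((k:ℝ) - 1) / 2) * s)))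
    {t ε : ℝ} (ht : 0 < t) (hε0 : 0 < ε) (hε : ε < 1/2) :
    (ℙ {ω | ∑ k ∈ Finset.Icc (m + 1) n, E k ω ≤ t}).toReal
      ≤ exp ((3*ε*(m:ℝ)^2/2)*t - (3*ε*(m:ℝ)^2/2)*(2/(m:ℝ) - 2/(n:ℝ))
          + (3*ε*(m:ℝ)^2/2)^2/2*(4/(3*(m:ℝ)^3))) := by
  classical
  set θ : ℝ := 3*ε*(m:ℝ)^2/2 with hθdef
  have hmR : (1:ℝ) ≤ (m:ℝ) := by exact_mod_cast hm
  have hθ0 : 0 ≤ θ := by positivity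
  have hlam : ∀ k ∈ Finset.Icc (m + 1) n,
      -θ < (k:ℝ) * ((k:ℝ) - 1) / 2 ∧ (0:ℝ) < (k:ℝ) * ((k:ℝ) - 1) / 2 := by
    intro k hk
    obtain ⟨hlb, hpos⟩ := lam_lb hm hk
    exact ⟨by linarith, hpos⟩
  have hmgf : ∀ k ∈ Finset.Icc (m + 1) n,
      Integrable (fun ω => exp (-θ * E k ω)) ℙ ∧
      mgf (E k) ℙ (-θ) = ((k:ℝ) * ((k:ℝ) - 1) / 2) / ((k:ℝ) * ((k:ℝ) - 1) / 2 + θ) := by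
    intro k hk
    have hk' := Finset.mem_Icc.mp hk
    have h := exp_mul_integrable_and_mgf (hmeas k) (hlam k hk).2
      (htail k (by omega) hk'.2) (hlam k hk).1
    refine ⟨h.1, ?_⟩
    rw [h.2, sub_neg_eq_add]
  have h_int : ∀ k ∈ Finset.Icc (m + 1) n, Integrable (fun ω => exp (-θ * E k ω)) ℙ :=
    fun k hk => (hmgf k hk).1
  have h_int_sum := hindep.integrable_exp_mul_sum hmeas h_int
  have hset : {ω | ∑ k ∈ Finset.Icc (m + 1) n, E k ω ≤ t}
      = {ω | (∑ k ∈ Finset.Icc (m + 1) n, E k) ω ≤ t} := by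
    ext ω; simp [Finset.sum_apply]
  have hcher := measure_le_le_exp_mul_mgf (μ := ℙ) (X := ∑ k ∈ Finset.Icc (m + 1) n, E k)
      t (neg_nonpos.mpr hθ0) h_int_sum
  rw [hset]
  refine hcher.trans ?_
  rw [hindep.mgf_sum hmeas]
  have hprod : ∏ k ∈ Finset.Icc (m + 1) n, mgf (E k) ℙ (-θ)
      ≤ exp (∑ k ∈ Finset.Icc (m + 1) n,
          (-(θ / ((k:ℝ) * ((k:ℝ) - 1) / 2)) + θ^2 / (2 * ((k:ℝ) * ((k:ℝ) - 1) / 2)^2))) := by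
    rw [Real.exp_sum]
    apply Finset.prod_le_prod
    · intro k hk; exact mgf_nonneg
    · intro k hk
      rw [(hmgf k hk).2]
      exact ratio_le_exp_lower (hlam k hk).2 hθ0
  have hsum : ∑ k ∈ Finset.Icc (m + 1) n,
      (-(θ / ((k:ℝ) * ((k:ℝ) - 1) / 2)) + θ^2 / (2 * ((k:ℝ) * ((k:ℝ) - 1) / 2)^2))
      ≤ -θ*(2/(m:ℝ) - 2/(n:ℝ)) + θ^2/2*(4/(3*(m:ℝ)^3)) := by
    rw [Finset.sum_add_distrib]
    have hA : ∑ k ∈ Finset.Icc (m + 1) n, -(θ / ((k:ℝ) * ((k:ℝ) - 1) / 2))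
        = -θ*(2/(m:ℝ) - 2/(n:ℝ)) := by
      have : ∑ k ∈ Finset.Icc (m + 1) n, -(θ / ((k:ℝ) * ((k:ℝ) - 1) / 2))
          = -θ * ∑ k ∈ Finset.Icc (m + 1) n, 1 / ((k:ℝ) * ((k:ℝ) - 1) / 2) := by
        rw [Finset.mul_sum]
        apply Finset.sum_congr rfl
        intro k hk
        rw [div_eq_mul_one_div, neg_mul]
      rw [this, sum_inv_lam hm hmn]
    have hB : ∑ k ∈ Finset.Icc (m + 1) n, θ^2 / (2 * ((k:ℝ) * ((k:ℝ) - 1) / 2)^2)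
        ≤ θ^2/2*(4/(3*(m:ℝ)^3)) := by
      have heq : ∑ k ∈ Finset.Icc (m + 1) n, θ^2 / (2 * ((k:ℝ) * ((k:ℝ) - 1) / 2)^2)
          = θ^2/2 * ∑ k ∈ Finset.Icc (m + 1) n, 1 / ((k:ℝ) * ((k:ℝ) - 1) / 2)^2 := by
        rw [Finset.mul_sum]
        apply Finset.sum_congr rfl
        intro k hk
        have hpos := (lam_lb hm hk).2
        field_simp
      rw [heq]
      exact mul_le_mul_of_nonneg_left (sum_inv_lam_sq hm hmn) (by positivity)
    linarith
  calc exp (-(-θ) * t) * ∏ k ∈ Finset.Icc (m + 1) n, mgf (E k) ℙ (-θ)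
      ≤ exp (-(-θ) * t) * exp (∑ k ∈ Finset.Icc (m + 1) n,
          (-(θ / ((k:ℝ) * ((k:ℝ) - 1) / 2)) + θ^2 / (2 * ((k:ℝ) * ((k:ℝ) - 1) / 2)^2))) :=
        mul_le_mul_of_nonneg_left hprod (exp_pos _).le
    _ = exp (-(-θ) * t + ∑ k ∈ Finset.Icc (m + 1) n,
          (-(θ / ((k:ℝ) * ((k:ℝ) - 1) / 2)) + θ^2 / (2 * ((k:ℝ) * ((k:ℝ) - 1) / 2)^2))) :=
        (Real.exp_add _ _).symm
    _ ≤ exp (θ*t + (-θ*(2/(m:ℝ) - 2/(n:ℝ)) + θ^2/2*(4/(3*(m:ℝ)^3)))) := by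
        apply exp_le_exp.mpr
        have h1 : -(-θ) * t = θ*t := by ring
        linarith [hsum]
    _ = exp (θ*t - θ*(2/(m:ℝ) - 2/(n:ℝ)) + θ^2/2*(4/(3*(m:ℝ)^3))) := by ring_nf

end Stmt6Aux

open Stmt6Aux

set_option maxHeartbeats 1000000 in
/-- large deviations for the block-counting process `N` of Kingman's
coalescent started with `n` blocks (a pure death process jumping from `k` to `k-1`
at rate `k(k-1)/2`, encoded via its independent exponential holding times `E k`:
`N(s) ≤ m` iff the sum of the holding times at states `m+1,…,n` is at most `s`).
If `t(n) → 0` with `1/t(n) = o(n)`, then for `0 < ε < 1/2` and `n` large,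
`P(1−ε < t·N(t)/2 < 1+ε) > 1 − exp(−ε²/t)`. -/
theorem stmt6 (t : ℕ → ℝ) (ht_pos : ∀ n, 0 < t n)
    (ht0 : Tendsto t atTop (nhds 0))
    (hto : Tendsto (fun n : ℕ => 1 / (t n * n)) atTop (nhds 0))
    (ε : ℝ) (hε0 : 0 < ε) (hε : ε < 1 / 2) :
    ∃ n₀ : ℕ, ∀ n : ℕ, n₀ ≤ n →
      ∀ (Ω : Type) [MeasureSpace Ω] [IsProbabilityMeasure (ℙ : Measure Ω)]
        (E : ℕ → Ω → ℝ) (N : ℝ → Ω → ℕ),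
        (∀ k, Measurable (E k)) →
        iIndepFun E ℙ →
        (∀ k, 2 ≤ k → k ≤ n → ∀ s : ℝ, 0 ≤ s →
          ℙ {ω | s < E k ω}
            = ENNReal.ofReal (Real.exp (-((k : ℝ) * ((k : ℝ) - 1) / 2) * s))) →
        (∀ s : ℝ, 0 ≤ s → ∀ ω, ∀ m : ℕ, 1 ≤ m →
          (N s ω ≤ m ↔ ∑ k ∈ Finset.Icc (m + 1) n, E k ω ≤ s)) →
        ENNReal.ofReal (1 - Real.exp (-(ε ^ 2) / t n)) <
          ℙ {ω | 1 - ε < t n * (N (t n) ω : ℝ) / 2 ∧ t n * (N (t n) ω : ℝ) / 2 < 1 + ε} := by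
  have hev1 : ∀ᶠ n in atTop, t n < ε ^ 2 / 40 :=
    ht0.eventually (gt_mem_nhds (by positivity))
  have hev2 : ∀ᶠ n in atTop, 1 / (t n * n) < ε / 200 :=
    hto.eventually (gt_mem_nhds (by positivity))
  have hev3 : ∀ᶠ n : ℕ in atTop, 1 ≤ n := eventually_ge_atTop 1
  obtain ⟨n₀, hn₀⟩ := eventually_atTop.mp ((hev1.and hev2).and hev3)
  refine ⟨n₀, fun n hn Ω _ _ E N hmeas hindep hE hN => ?_⟩
  obtain ⟨⟨hT40, hTn⟩, hn1⟩ := hn₀ n hn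
  set T := t n with hTdef
  have hT : 0 < T := ht_pos n
  have hε1 : ε < 1 := by linarith
  have hεsq : ε ^ 2 ≤ ε := by nlinarith
  have hT40' : T ≤ ε ^ 2 / 40 := hT40.le
  have hTe : T ≤ ε / 40 := by nlinarith
  have hT1 : T ≤ 1 / 160 := by nlinarith
  have hnR : (1:ℝ) ≤ (n:ℝ) := by exact_mod_cast hn1
  have hnR0 : (0:ℝ) < (n:ℝ) := by linarith
  -- from hTn : 1/(T*n) < ε/200  get  T*n ≥ 200/ε  hence  n ≥ 400/T
  have hTn' : 200 / ε ≤ T * n := by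
    have hTn0 : 0 < T * n := by positivity
    rw [div_le_iff₀ hε0]
    rw [div_lt_iff₀ hTn0] at hTn
    nlinarith
  have hn400 : 400 / T ≤ (n:ℝ) := by
    rw [div_le_iff₀ hT]
    have : 200 / ε ≥ 400 := by
      rw [ge_iff_le, le_div_iff₀ hε0]; linarith
    calc (400:ℝ) ≤ 200 / ε := this
      _ ≤ T * n := hTn'
      _ = (n:ℝ) * T := by ring
  -- define the two thresholds
  set x₁ : ℝ := 2 * (1 + ε) / T with hx₁def
  set x₀ : ℝ := 2 * (1 - ε) / T with hx₀def
  have hx₁pos : 0 < x₁ := by positivity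
  have hx₀pos : 0 < x₀ := by
    have : 0 < 2 * (1 - ε) := by linarith
    positivity
  have hx₁ge2 : 2 ≤ x₁ := by
    rw [hx₁def, le_div_iff₀ hT]
    nlinarith
  have hx₀ge1 : 1 ≤ x₀ := by
    rw [hx₀def, le_div_iff₀ hT]
    nlinarith
  set m₁ : ℕ := ⌈x₁⌉₊ - 1 with hm₁def
  set m₀ : ℕ := ⌊x₀⌋₊ with hm₀def
  have hceil1 : 1 ≤ ⌈x₁⌉₊ := Nat.one_le_ceil_iff.mpr hx₁pos
  have hm₁cast : (m₁:ℝ) = (⌈x₁⌉₊:ℝ) - 1 := by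
    rw [hm₁def]
    push_cast [Nat.cast_sub hceil1]
    ring
  have hm₁lt : (m₁:ℝ) < x₁ := by
    have := Nat.ceil_lt_add_one hx₁pos.le
    rw [hm₁cast]; linarith
  have hm₁ge : x₁ - 1 ≤ (m₁:ℝ) := by
    have := Nat.le_ceil x₁
    rw [hm₁cast]; linarith
  have hm₁1 : 1 ≤ m₁ := by
    have : (1:ℝ) ≤ (m₁:ℝ) := by linarith
    exact_mod_cast this
  have hm₁n : m₁ ≤ n := by
    have : (m₁:ℝ) ≤ (n:ℝ) := by
      have hx₁le : x₁ ≤ 3 / T := by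
        rw [hx₁def, div_le_div_iff₀ hT hT]
        nlinarith
      have h3T : (3:ℝ)/T ≤ 400/T := by
        rw [div_le_div_iff₀ hT hT]; nlinarith
      linarith [hn400, hx₁le, hm₁lt]
    exact_mod_cast this
  have hm₀le : (m₀:ℝ) ≤ x₀ := Nat.floor_le hx₀pos.le
  have hm₀lt : x₀ < (m₀:ℝ) + 1 := Nat.lt_floor_add_one x₀
  have hm₀1 : 1 ≤ m₀ := by
    rw [hm₀def]
    exact Nat.le_floor (by exact_mod_cast hx₀ge1)
  have hm₀n : m₀ ≤ n := by
    have : (m₀:ℝ) ≤ (n:ℝ) := by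
      have hx₀le : x₀ ≤ 2 / T := by
        rw [hx₀def, div_le_div_iff₀ hT hT]
        nlinarith
      have h2T : (2:ℝ)/T ≤ 400/T := by
        rw [div_le_div_iff₀ hT hT]; nlinarith
      linarith [hn400, hx₀le, hm₀le]
    exact_mod_cast this
  -- basic products
  have hx₁T : x₁ * T = 2 * (1 + ε) := by rw [hx₁def]; field_simp
  have hx₀T : x₀ * T = 2 * (1 - ε) := by rw [hx₀def]; field_simp
  have hm₁R1 : (1:ℝ) ≤ (m₁:ℝ) := by exact_mod_cast hm₁1
  have hm₀R1 : (1:ℝ) ≤ (m₀:ℝ) := by exact_mod_cast hm₀1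
  have hm₁T : 2 * (1 + ε) ≤ (m₁:ℝ) * T + T := by
    have h1 : (x₁ - 1) * T ≤ (m₁:ℝ) * T := mul_le_mul_of_nonneg_right hm₁ge hT.le
    nlinarith
  have hm₀Ta : (m₀:ℝ) * T ≤ 2 * (1 - ε) := by
    have h1 : (m₀:ℝ) * T ≤ x₀ * T := mul_le_mul_of_nonneg_right hm₀le hT.le
    linarith
  have hm₀Tb : 2 * (1 - ε) ≤ (m₀:ℝ) * T + T := by
    have h1 : x₀ * T ≤ ((m₀:ℝ) + 1) * T := mul_le_mul_of_nonneg_right hm₀lt.le hT.le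
    nlinarith
  have hm₀n50 : (m₀:ℝ) / (n:ℝ) ≤ ε / 50 := by
    have hx₀le : x₀ ≤ 2 / T := by
      rw [hx₀def, div_le_div_iff₀ hT hT]
      nlinarith
    have h1 : (m₀:ℝ) / n ≤ (2 / T) / n :=
      (div_le_div_iff_of_pos_right hnR0).mpr (le_trans hm₀le hx₀le)
    have h2 : (2 / T) / n = 2 * (1 / (T * n)) := by
      field_simp
    have h3 : 1 / (T * n) ≤ ε / 200 := hTn.le
    calc (m₀:ℝ) / n ≤ 2 * (1 / (T * n)) := by rw [← h2]; exact h1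
      _ ≤ 2 * (ε / 200) := by linarith
      _ ≤ ε / 50 := by linarith
  -- Chernoff + numeric bounds
  set e' : ℝ := exp (-(21/20) * ε^2 / T) with he'def
  have he'pos : 0 < e' := exp_pos _
  have hbU : (ℙ {ω | T ≤ ∑ k ∈ Finset.Icc (m₁ + 1) n, E k ω}).toReal ≤ e' := by
    refine (chernoff_upper hmeas hindep hm₁1 hm₁n hE hT hε0 hε).trans ?_
    rw [he'def]
    apply exp_le_exp.mpr
    have := numU (t := T) (m := (m₁:ℝ)) hε0 hε hT hTe hm₁R1 hm₁T
    linarith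
  have hbL : (ℙ {ω | ∑ k ∈ Finset.Icc (m₀ + 1) n, E k ω ≤ T}).toReal ≤ e' := by
    refine (chernoff_lower hmeas hindep hm₀1 hm₀n hE hT hε0 hε).trans ?_
    rw [he'def]
    apply exp_le_exp.mpr
    have := numL (t := T) (m := (m₀:ℝ)) (n := (n:ℝ)) hε0 hε hT hTe hm₀R1 hm₀Ta hm₀Tb hnR0 hm₀n50
    linarith
  have hU' : ℙ {ω | T ≤ ∑ k ∈ Finset.Icc (m₁ + 1) n, E k ω} ≤ ENNReal.ofReal e' := by
    rw [← ENNReal.ofReal_toReal (measure_ne_top ℙ _)]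
    exact ENNReal.ofReal_le_ofReal hbU
  have hL' : ℙ {ω | ∑ k ∈ Finset.Icc (m₀ + 1) n, E k ω ≤ T} ≤ ENNReal.ofReal e' := by
    rw [← ENNReal.ofReal_toReal (measure_ne_top ℙ _)]
    exact ENNReal.ofReal_le_ofReal hbL
  -- the good event
  have hS₁meas : Measurable fun ω => ∑ k ∈ Finset.Icc (m₁ + 1) n, E k ω :=
    Finset.measurable_sum _ (fun k _ => hmeas k)
  have hS₀meas : Measurable fun ω => ∑ k ∈ Finset.Icc (m₀ + 1) n, E k ω :=
    Finset.measurable_sum _ (fun k _ => hmeas k)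
  set B : Set Ω := {ω | ∑ k ∈ Finset.Icc (m₁ + 1) n, E k ω ≤ T}
      ∩ {ω | T < ∑ k ∈ Finset.Icc (m₀ + 1) n, E k ω} with hBdef
  have hBmeas : MeasurableSet B :=
    (measurableSet_le hS₁meas measurable_const).inter
      (measurableSet_lt measurable_const hS₀meas)
  have hBsub : B ⊆ {ω | 1 - ε < T * (N T ω : ℝ) / 2 ∧ T * (N T ω : ℝ) / 2 < 1 + ε} := by
    rintro ω ⟨h1, h2⟩
    have hNle : N T ω ≤ m₁ := (hN T hT.le ω m₁ hm₁1).mpr h1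
    have hNgt : m₀ < N T ω := by
      by_contra h
      push_neg at h
      exact absurd ((hN T hT.le ω m₀ hm₀1).mp h) (not_le.mpr h2)
    have hc1 : (m₀:ℝ) + 1 ≤ (N T ω : ℝ) := by exact_mod_cast Nat.succ_le_of_lt hNgt
    have hc2 : (N T ω : ℝ) ≤ (m₁:ℝ) := by exact_mod_cast hNle
    constructor
    · have h3 : x₀ * T < ((m₀:ℝ) + 1) * T := by
        apply mul_lt_mul_of_pos_right hm₀lt hT
      have h4 : ((m₀:ℝ) + 1) * T ≤ (N T ω : ℝ) * T := mul_le_mul_of_nonneg_right hc1 hT.le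
      nlinarith
    · have h3 : (N T ω : ℝ) * T ≤ (m₁:ℝ) * T := mul_le_mul_of_nonneg_right hc2 hT.le
      have h4 : (m₁:ℝ) * T < x₁ * T := mul_lt_mul_of_pos_right hm₁lt hT
      nlinarith
  have hcompl : Bᶜ ⊆ {ω | T ≤ ∑ k ∈ Finset.Icc (m₁ + 1) n, E k ω}
      ∪ {ω | ∑ k ∈ Finset.Icc (m₀ + 1) n, E k ω ≤ T} := by
    intro ω hω
    simp only [hBdef, Set.mem_compl_iff, Set.mem_inter_iff, not_and_or, Set.mem_setOf_eq,
      not_le, not_lt] at hω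
    rcases hω with h | h
    · exact Set.mem_union_left _ (le_of_lt h)
    · exact Set.mem_union_right _ h
  have hPBc : ℙ Bᶜ ≤ ENNReal.ofReal (2 * e') := by
    refine (measure_mono hcompl).trans ((measure_union_le _ _).trans ?_)
    calc ℙ {ω | T ≤ ∑ k ∈ Finset.Icc (m₁ + 1) n, E k ω}
          + ℙ {ω | ∑ k ∈ Finset.Icc (m₀ + 1) n, E k ω ≤ T}
        ≤ ENNReal.ofReal e' + ENNReal.ofReal e' := add_le_add hU' hL'
      _ = ENNReal.ofReal (e' + e') := (ENNReal.ofReal_add he'pos.le he'pos.le).symm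
      _ = ENNReal.ofReal (2 * e') := by rw [two_mul]
  have hPB : ℙ B = 1 - ℙ Bᶜ := by
    have := prob_compl_eq_one_sub (μ := ℙ) hBmeas.compl
    rw [compl_compl] at this
    rw [this]
  -- endgame numbers
  have ha40 : 40 ≤ ε^2 / T := by
    rw [le_div_iff₀ hT]
    linarith
  have h2exp : (2:ℝ) < exp (ε^2 / (20 * T)) := by
    have h1 : (3:ℝ) ≤ exp 2 := by
      have := Real.add_one_le_exp (2:ℝ)
      linarith
    have h2 : exp (2:ℝ) ≤ exp (ε^2 / (20 * T)) := by
      apply exp_le_exp.mpr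
      rw [le_div_iff₀ hT] at ha40
      rw [le_div_iff₀ (show (0:ℝ) < 20 * T by positivity)]
      linarith
    linarith
  have h2er : 2 * e' < exp (-(ε^2) / T) := by
    have h1 : 2 * e' < exp (ε^2 / (20 * T)) * e' := mul_lt_mul_of_pos_right h2exp he'pos
    have h2 : exp (ε^2 / (20 * T)) * e' = exp (-(ε^2) / T) := by
      rw [he'def, ← Real.exp_add]
      congr 1
      field_simp
      ring
    linarith
  have hr1 : exp (-(ε^2) / T) < 1 := by
    rw [Real.exp_lt_one_iff]
    have : 0 < ε^2 / T := by positivity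
    rw [neg_div]
    linarith
  calc ENNReal.ofReal (1 - exp (-(ε^2) / T))
      < ENNReal.ofReal (1 - 2 * e') := by
        apply (ENNReal.ofReal_lt_ofReal_iff (by linarith)).mpr
        linarith
    _ = 1 - ENNReal.ofReal (2 * e') := by
        rw [ENNReal.ofReal_sub _ (by positivity), ENNReal.ofReal_one]
    _ ≤ 1 - ℙ Bᶜ := tsub_le_tsub_left hPBc 1
    _ = ℙ B := hPB.symm
    _ ≤ ℙ {ω | 1 - ε < T * (N T ω : ℝ) / 2 ∧ T * (N T ω : ℝ) / 2 < 1 + ε} := measure_mono hBsub
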